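/- Let L > 0 and 0 ≤ x₀ < L/2. Define f(ν) = -(ν/2)·(cot((ν/2)(L/2 - x₀)) + cot((ν/2)(L/2 + x₀))) for ν > 0 not in the set P = {2kπ/(L/2 + x₀) : k ∈ ℕ} ∪ {2lπ/(L/2 - x₀) : l ∈ ℕ}. Then f is strictly increasing on each connected component of its domain in (0,∞). -/

import Mathlib

open Real Set

lemma aux_deriv (c : ℝ) {x : ℝ} (hs : Real.sin (x/2*c) ≠ 0) :
    HasDerivAt (fun ν : ℝ => -(ν/2) * (Real.cos (ν/2*c) / Real.sin (ν/2*c)))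
      ((x/2*c - Real.sin (x/2*c) * Real.cos (x/2*c)) / (2 * Real.sin (x/2*c)^2)) x := by
  have hu : HasDerivAt (fun ν : ℝ => ν/2*c) (1/2*c) x := by
    simpa using ((hasDerivAt_id x).div_const 2).mul_const c
  have hq := (hu.cos.div hu.sin hs)
  have hm : HasDerivAt (fun ν : ℝ => -(ν/2)) (-(1/2)) x := by
    simpa [neg_div] using ((hasDerivAt_neg x).div_const 2)
  have h := hm.mul hq
  refine HasDerivAt.congr_deriv h ?_
  simp only [Pi.div_apply]
  have h1 := Real.sin_sq_add_cos_sq (x/2*c)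
  set s := Real.sin (x/2*c) with hsdef
  set co := Real.cos (x/2*c) with hcodef
  have step1 : -(1/2)*(co/s) + -(x/2)*((-s*(1/2*c)*s - co*(co*(1/2*c)))/s^2)
      = -(1/2)*(co/s) + (x*c/4)*((s^2+co^2)/s^2) := by ring
  rw [step1, h1]
  field_simp
  ring

lemma aux_pos {u : ℝ} (hu : 0 < u) (hs : Real.sin u ≠ 0) :
    0 < (u - Real.sin u * Real.cos u) / (2 * Real.sin u ^ 2) := by
  have h2 : Real.sin (2*u) < 2*u := Real.sin_lt (by linarith)
  rw [Real.sin_two_mul] at h2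
  have hsq : 0 < Real.sin u ^ 2 := by positivity
  apply div_pos (by nlinarith) (by linarith)

lemma aux_sin_ne (c : ℝ) (hc : 0 < c) {ν : ℝ} (hν : 0 < ν)
    (h : Real.sin (ν/2*c) = 0) : ∃ k : ℕ, 0 < k ∧ ν = 2*k*π/c := by
  rw [Real.sin_eq_zero_iff] at h
  obtain ⟨n, hn⟩ := h
  have hpos : 0 < ν/2*c := by positivity
  have hn0 : 0 < n := by
    by_contra hle
    push_neg at hle
    have : (n:ℝ) * π ≤ 0 := mul_nonpos_of_nonpos_of_nonneg (by exact_mod_cast hle) Real.pi_pos.le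
    linarith
  refine ⟨n.toNat, by omega, ?_⟩
  have : (n.toNat : ℝ) = (n : ℝ) := by exact_mod_cast Int.toNat_of_nonneg hn0.le
  rw [this]
  field_simp
  linarith [hn]

theorem stmt_2 (L x₀ : ℝ) (hL : 0 < L) (hx₀ : 0 ≤ x₀) (hx₀' : x₀ < L/2)
    (P : Set ℝ)
    (hP : P = {ν : ℝ | ∃ k : ℕ, 0 < k ∧
      (ν = 2*k*π/(L/2 + x₀) ∨ ν = 2*k*π/(L/2 - x₀))})
    (f : ℝ → ℝ)
    (hf : ∀ ν, f ν = -(ν/2) * (Real.cos (ν/2*(L/2 - x₀)) / Real.sin (ν/2*(L/2 - x₀))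
        + Real.cos (ν/2*(L/2 + x₀)) / Real.sin (ν/2*(L/2 + x₀)))) :
    ∀ a b : ℝ, 0 < a → a < b → (∀ ν ∈ Set.Icc a b, ν ∉ P) → f a < f b := by
  intro a b ha hab hnot
  set c₁ := L/2 - x₀ with hc1
  set c₂ := L/2 + x₀ with hc2
  have hc1p : 0 < c₁ := by simp [hc1]; linarith
  have hc2p : 0 < c₂ := by simp [hc2]; linarith
  -- sin nonvanishing on Icc a b
  have hsin : ∀ ν ∈ Set.Icc a b, Real.sin (ν/2*c₁) ≠ 0 ∧ Real.sin (ν/2*c₂) ≠ 0 := by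
    intro ν hν
    have hνp : 0 < ν := lt_of_lt_of_le ha hν.1
    constructor
    · intro h
      obtain ⟨k, hk, hkeq⟩ := aux_sin_ne c₁ hc1p hνp h
      exact hnot ν hν (by rw [hP]; exact ⟨k, hk, Or.inr hkeq⟩)
    · intro h
      obtain ⟨k, hk, hkeq⟩ := aux_sin_ne c₂ hc2p hνp h
      exact hnot ν hν (by rw [hP]; exact ⟨k, hk, Or.inl hkeq⟩)
  have hfeq : f = fun ν => (-(ν/2) * (Real.cos (ν/2*c₁) / Real.sin (ν/2*c₁)))
      + (-(ν/2) * (Real.cos (ν/2*c₂) / Real.sin (ν/2*c₂))) := by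
    funext ν
    rw [hf ν]
    ring
  set D := fun x : ℝ =>
      (x/2*c₁ - Real.sin (x/2*c₁) * Real.cos (x/2*c₁)) / (2 * Real.sin (x/2*c₁)^2)
      + (x/2*c₂ - Real.sin (x/2*c₂) * Real.cos (x/2*c₂)) / (2 * Real.sin (x/2*c₂)^2) with hD
  have hderiv : ∀ x ∈ Set.Icc a b, HasDerivAt f (D x) x := by
    intro x hx
    rw [hfeq]
    exact ((aux_deriv c₁ (hsin x hx).1).add (aux_deriv c₂ (hsin x hx).2))
  have hmono : StrictMonoOn f (Set.Icc a b) := by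
    apply strictMonoOn_of_deriv_pos (convex_Icc a b)
    · exact fun x hx => (hderiv x hx).continuousAt.continuousWithinAt
    · intro x hx
      rw [interior_Icc] at hx
      have hx' : x ∈ Set.Icc a b := ⟨hx.1.le, hx.2.le⟩
      rw [(hderiv x hx').deriv]
      have hxp : 0 < x := lt_trans ha hx.1
      have p1 := aux_pos (u := x/2*c₁) (by positivity) (hsin x hx').1
      have p2 := aux_pos (u := x/2*c₂) (by positivity) (hsin x hx').2
      rw [hD]
      dsimp only
      linarith
  exact hmono ⟨le_refl a, hab.le⟩ ⟨hab.le, le_refl b⟩ hab
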